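/- Let X be a finite-dimensional smooth real Banach space and T : X → X a nonzero linear operator such that ker T contains a nonzero right symmetric point. Then the linear span of the norm attainment set M_T is a proper subspace of X. -/

import Mathlib

/-- Birkhoff-James orthogonality: `u ⊥_B v` iff `‖u + λ v‖ ≥ ‖u‖` for all real `λ`. -/
def BJOrth {E : Type*} [NormedAddCommGroup E] [NormedSpace ℝ E] (u v : E) : Prop :=
  ∀ l : ℝ, ‖u‖ ≤ ‖u + l • v‖

/-- Coefficient inequality from BJ orthogonality. -/
lemma bj_coeff {E : Type*} [NormedAddCommGroup E] [NormedSpace ℝ E]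
    {u v : E} (hu : ‖u‖ = 1) (h : BJOrth u v) (a b : ℝ) :
    |a| ≤ ‖a • u + b • v‖ := by
  rcases eq_or_ne a 0 with rfl | ha
  · simpa using norm_nonneg (b • v)
  · have h1 : (1 : ℝ) ≤ ‖u + (b / a) • v‖ := by simpa [hu] using h (b / a)
    have h2 : a • u + b • v = a • (u + (b / a) • v) := by
      rw [smul_add, smul_smul]
      field_simp
    rw [h2, norm_smul, Real.norm_eq_abs]
    nlinarith [abs_nonneg a, abs_pos.mpr ha]

/-- James characterization (hard direction): a supporting functional vanishing on `v`. -/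
lemma bj_functional {E : Type*} [NormedAddCommGroup E] [NormedSpace ℝ E]
    [FiniteDimensional ℝ E]
    {u v : E} (hu : ‖u‖ = 1) (h : BJOrth u v) :
    ∃ f : E →L[ℝ] ℝ, ‖f‖ = 1 ∧ f u = 1 ∧ f v = 0 := by
  have hu0 : u ≠ 0 := by intro h0; rw [h0, norm_zero] at hu; norm_num at hu
  by_cases hsp : ∃ c : ℝ, c • u = v
  · -- then v = 0
    obtain ⟨c, rfl⟩ := hsp
    have hc : c = 0 := by
      by_contra hc
      have := h (-(1 / c))
      rw [hu] at this
      have h0 : u + (-(1 / c)) • c • u = 0 := by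
        rw [smul_smul]
        field_simp
        simp
      rw [h0, norm_zero] at this
      linarith
    obtain ⟨f, hf1, hf2⟩ := exists_dual_vector ℝ u (norm_ne_zero_iff.mpr hu0)
    refine ⟨f, hf1, by rw [hf2, hu]; norm_num, ?_⟩
    simp [hc]
  · -- v, u linearly independent
    push_neg at hsp
    have hli : LinearIndependent ℝ ![v, u] := by
      rw [linearIndependent_fin2]
      refine ⟨by simpa using hu0, by simpa using hsp⟩
    set p := Submodule.span ℝ (Set.range ![v, u]) with hp
    let B := Module.Basis.span hli
    have key : ∀ w : p, |(B.coord 1) w| ≤ ‖(w : E)‖ := by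
      intro w
      have hrep := B.sum_repr w
      have hcoe : (w : E) = (B.repr w 1) • u + (B.repr w 0) • v := by
        have := congrArg (Subtype.val) hrep
        rw [← this]
        push_cast [Fin.sum_univ_two]
        rw [Module.Basis.span_apply, Module.Basis.span_apply]
        simp [Matrix.cons_val_zero, Matrix.cons_val_one]
        abel
      rw [hcoe]
      exact bj_coeff hu h _ _
    let F : p →L[ℝ] ℝ := LinearMap.toContinuousLinearMap (B.coord 1)
    have hFle : ‖F‖ ≤ 1 := by
      apply ContinuousLinearMap.opNorm_le_bound _ zero_le_one
      intro w
      rw [one_mul]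
      simpa [Real.norm_eq_abs, F] using key w
    obtain ⟨g, hg1, hg2⟩ := exists_extension_norm_eq p F
    have humem : u ∈ p := Submodule.subset_span (by simp [Set.range])
    have hvmem : v ∈ p := Submodule.subset_span (by simp [Set.range])
    have hgu : g u = 1 := by
      have h1 : g u = F ⟨u, humem⟩ := hg1 ⟨u, humem⟩
      have h2 : (⟨u, humem⟩ : p) = B 1 := by
        apply Subtype.ext
        rw [Module.Basis.span_apply]
        simp
      rw [h1, h2]
      show B.coord 1 (B 1) = 1
      simp
    have hgv : g v = 0 := by
      have h1 : g v = F ⟨v, hvmem⟩ := hg1 ⟨v, hvmem⟩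
      have h2 : (⟨v, hvmem⟩ : p) = B 0 := by
        apply Subtype.ext
        rw [Module.Basis.span_apply]
        simp
      rw [h1, h2]
      show B.coord 1 (B 0) = 0
      simp
    have hgn : ‖g‖ = 1 := by
      have hle : ‖g‖ ≤ 1 := hg2 ▸ hFle
      have hge : (1 : ℝ) ≤ ‖g‖ := by
        have := g.le_opNorm u
        rw [hgu, hu, mul_one] at this
        simpa using this
      linarith
    exact ⟨g, hgn, hgu, hgv⟩

theorem stmt10 {X : Type*} [NormedAddCommGroup X] [NormedSpace ℝ X]
    [FiniteDimensional ℝ X]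
    (hsm : ∀ z : X, ‖z‖ = 1 → ∃! f : X →L[ℝ] ℝ, ‖f‖ = 1 ∧ f z = 1)
    (T : X →L[ℝ] X) (hT : T ≠ 0)
    (z : X) (hz : z ≠ 0) (hker : T z = 0)
    (hrs : ∀ y : X, BJOrth y z → BJOrth z y) :
    Submodule.span ℝ {x : X | ‖x‖ = 1 ∧ ‖T x‖ = ‖T‖} ≠ ⊤ := by
  have hTn : 0 < ‖T‖ := norm_pos_iff.mpr hT
  have hzn : 0 < ‖z‖ := norm_pos_iff.mpr hz
  set w : X := ‖z‖⁻¹ • z with hw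
  have hwn : ‖w‖ = 1 := by
    rw [hw, norm_smul, norm_inv, norm_norm, inv_mul_cancel₀ (ne_of_gt hzn)]
  -- for each x in M_T, w ⊥_B x
  have hbj : ∀ x : X, ‖x‖ = 1 → ‖T x‖ = ‖T‖ → BJOrth w x := by
    intro x hx hTx
    have hxz : BJOrth x z := by
      intro l
      have h1 : T (x + l • z) = T x := by
        rw [map_add, map_smul, hker, smul_zero, add_zero]
      have h2 : ‖T (x + l • z)‖ ≤ ‖T‖ * ‖x + l • z‖ := T.le_opNorm _
      rw [h1, hTx] at h2
      rw [hx]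
      nlinarith
    have hzx : BJOrth z x := hrs x hxz
    intro l
    have := hzx (l * ‖z‖)
    rw [hwn, hw]
    have heq : ‖z‖⁻¹ • z + l • x = ‖z‖⁻¹ • (z + (l * ‖z‖) • x) := by
      rw [smul_add, smul_smul]
      field_simp
    rw [heq, norm_smul, norm_inv, norm_norm]
    rw [inv_mul_eq_div, le_div_iff₀ hzn, one_mul]
    exact this
  -- unique supporting functional at w
  obtain ⟨f, ⟨hf1, hf2⟩, hfu⟩ := hsm w hwn
  -- f vanishes on M_T
  have hfM : ∀ x ∈ {x : X | ‖x‖ = 1 ∧ ‖T x‖ = ‖T‖}, f x = 0 := by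
    rintro x ⟨hx1, hx2⟩
    obtain ⟨g, hg1, hg2, hg3⟩ := bj_functional hwn (hbj x hx1 hx2)
    have : g = f := hfu g ⟨hg1, hg2⟩
    rw [← this]
    exact hg3
  intro htop
  have hsub : Submodule.span ℝ {x : X | ‖x‖ = 1 ∧ ‖T x‖ = ‖T‖} ≤ LinearMap.ker (f : X →ₗ[ℝ] ℝ) := by
    apply Submodule.span_le.mpr
    intro x hx
    exact LinearMap.mem_ker.mpr (hfM x hx)
  have : w ∈ LinearMap.ker (f : X →ₗ[ℝ] ℝ) := hsub (htop ▸ Submodule.mem_top)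
  rw [LinearMap.mem_ker] at this
  rw [ContinuousLinearMap.coe_coe] at this
  rw [this] at hf2
  norm_num at hf2
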